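/- For every Büchi automaton A over the alphabet 𝒫(AP), the support of A satisfies supp(A) = ⋂ { upCCT(π) | π ∈ L(A) ∩ UP }, i.e. a formula is supported by A if and only if it is satisfied by every ultimately periodic trace accepted by A. -/

import Mathlib

/-- LTL formulae over a set `AP` of atomic propositions:
`⊥ | p | ¬φ | φ∨φ | Xφ | φ U φ`. -/
inductive LTLFormula (AP : Type) : Type
  | bot : LTLFormula AP
  | atom : AP → LTLFormula AP
  | neg : LTLFormula AP → LTLFormula AP
  | disj : LTLFormula AP → LTLFormula AP → LTLFormula AP
  | next : LTLFormula AP → LTLFormula AP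
  | untl : LTLFormula AP → LTLFormula AP → LTLFormula AP

/-- A trace is an infinite sequence of sets of atomic propositions. -/
abbrev Trace (AP : Type) : Type := ℕ → Set AP

/-- The suffix `π^i` of a trace. -/
def Trace.suffix {AP : Type} (π : Trace AP) (i : ℕ) : Trace AP := fun j => π (i + j)

/-- Satisfaction of an LTL formula by a trace. -/
def LTLFormula.sat {AP : Type} : LTLFormula AP → Trace AP → Prop
  | .bot, _ => False
  | .atom p, π => p ∈ π 0
  | .neg φ, π => ¬ LTLFormula.sat φ π
  | .disj φ ψ, π => LTLFormula.sat φ π ∨ LTLFormula.sat ψ π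
  | .next φ, π => LTLFormula.sat φ (π.suffix 1)
  | .untl φ ψ, π => ∃ i, LTLFormula.sat ψ (π.suffix i) ∧ ∀ j < i, LTLFormula.sat φ (π.suffix j)

/-- A Kripke structure: a finite state set (`Fin n`), a nonempty set of initial
states, a left-total transition relation, and a labeling function. -/
structure Kripke (AP : Type) where
  n : ℕ
  init : Set (Fin n)
  init_nonempty : init.Nonempty
  trans : Fin n → Fin n → Prop
  trans_total : ∀ s, ∃ s', trans s s'
  label : Fin n → Set AP

/-- The traces of a Kripke structure. -/
def Kripke.traces {AP : Type} (M : Kripke AP) : Set (Trace AP) :=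
  {π | ∃ ρ : ℕ → Fin M.n, ρ 0 ∈ M.init ∧ (∀ i, M.trans (ρ i) (ρ (i + 1))) ∧
        ∀ i, π i = M.label (ρ i)}

/-- `M ⊨ φ` : every trace of `M` satisfies `φ`. -/
def Kripke.sat {AP : Type} (M : Kripke AP) (φ : LTLFormula AP) : Prop :=
  ∀ π ∈ M.traces, φ.sat π

/-- `M ⊨ X` : `M` satisfies every formula in `X`. -/
def Kripke.satSet {AP : Type} (M : Kripke AP) (X : Set (LTLFormula AP)) : Prop :=
  ∀ φ ∈ X, M.sat φ

/-- The consequence operator of LTL: `ψ ∈ CnLTL AP X` iff every Kripke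
structure satisfying all of `X` satisfies `ψ`. -/
def CnLTL (AP : Type) (X : Set (LTLFormula AP)) : Set (LTLFormula AP) :=
  {ψ | ∀ M : Kripke AP, M.satSet X → M.sat ψ}

/-- The infinite word `ρ σ^ω` determined by a finite prefix `ρ` and a nonempty
finite period `σ`. -/
def extendPer {α : Type} (ρ σ : List α) (hσ : σ ≠ []) : ℕ → α := fun i =>
  if h : i < ρ.length then ρ.get ⟨i, h⟩
  else σ.get ⟨(i - ρ.length) % σ.length, Nat.mod_lt _ (List.length_pos_iff.mpr hσ)⟩

/-- An infinite word is ultimately periodic if it equals `ρ σ^ω` for finite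
words `ρ, σ` with `σ` nonempty. -/
def UltPeriodic {α : Type} (w : ℕ → α) : Prop :=
  ∃ (ρ σ : List α) (hσ : σ ≠ []), w = extendPer ρ σ hσ

/-- A Büchi automaton over alphabet `A`: a finite state set (`Fin n`), a
transition relation, initial states and recurrence states. -/
structure Buchi (A : Type) where
  n : ℕ
  trans : Fin n → A → Fin n → Prop
  start : Set (Fin n)
  recur : Set (Fin n)

/-- Acceptance of an infinite word by a Büchi automaton: there is a run from
an initial state visiting recurrence states infinitely often. -/
def Buchi.Accepts {A : Type} (B : Buchi A) (w : ℕ → A) : Prop :=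
  ∃ ρ : ℕ → Fin B.n, ρ 0 ∈ B.start ∧ (∀ i, B.trans (ρ i) (w i) (ρ (i + 1))) ∧
    ∀ N, ∃ i, N ≤ i ∧ ρ i ∈ B.recur

/-- The language of a Büchi automaton. -/
def Buchi.lang {A : Type} (B : Buchi A) : Set (ℕ → A) := {w | B.Accepts w}

/-- The support of a Büchi automaton over `𝒫(AP)`: the LTL formulae satisfied
by every accepted trace. -/
def Buchi.supp {AP : Type} (B : Buchi (Set AP)) : Set (LTLFormula AP) :=
  {φ | ∀ π ∈ B.lang, φ.sat π}

/-- The set of formulae satisfied by a trace. -/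
def upCCT {AP : Type} (π : Trace AP) : Set (LTLFormula AP) := {φ | φ.sat π}

/-- The complete consistent theories of LTL. -/
def CCT_LTL (AP : Type) : Set (Set (LTLFormula AP)) :=
  {K | CnLTL AP K = K ∧ K ≠ Set.univ ∧ ∀ φ, φ ∈ K ∨ LTLFormula.neg φ ∈ K}

namespace Scratch
variable {AP : Type}

lemma suffix_suffix (π : Trace AP) (a b : ℕ) : (π.suffix a).suffix b = π.suffix (a + b) := by
  funext m; show π (a + (b + m)) = π (a + b + m); ring_nf

lemma suffix_zero (π : Trace AP) : π.suffix 0 = π := by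
  funext m; show π (0 + m) = π m; rw [Nat.zero_add]

/-- subformulas -/
def sub : LTLFormula AP → List (LTLFormula AP)
  | .bot => [.bot]
  | .atom p => [.atom p]
  | .neg φ => .neg φ :: sub φ
  | .disj φ ψ => .disj φ ψ :: (sub φ ++ sub ψ)
  | .next φ => .next φ :: sub φ
  | .untl φ ψ => .untl φ ψ :: (sub φ ++ sub ψ)

lemma self_mem_sub (φ : LTLFormula AP) : φ ∈ sub φ := by
  cases φ <;> simp [sub]

lemma sub_subset {ψ φ : LTLFormula AP} (h : ψ ∈ sub φ) : sub ψ ⊆ sub φ := by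
  induction φ with
  | bot => simp [sub] at h; subst h; exact fun x hx => hx
  | atom p => simp [sub] at h; subst h; exact fun x hx => hx
  | neg φ ih =>
    rcases (by simpa [sub] using h : ψ = .neg φ ∨ ψ ∈ sub φ) with h | h
    · subst h; exact fun x hx => hx
    · exact fun x hx => List.mem_cons_of_mem _ (ih h hx)
  | disj φ1 φ2 ih1 ih2 =>
    rcases (by simpa [sub] using h : ψ = .disj φ1 φ2 ∨ ψ ∈ sub φ1 ∨ ψ ∈ sub φ2) with h | h | h
    · subst h; exact fun x hx => hx
    · exact fun x hx => List.mem_cons_of_mem _ (List.mem_append_left _ (ih1 h hx))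
    · exact fun x hx => List.mem_cons_of_mem _ (List.mem_append_right _ (ih2 h hx))
  | next φ ih =>
    rcases (by simpa [sub] using h : ψ = .next φ ∨ ψ ∈ sub φ) with h | h
    · subst h; exact fun x hx => hx
    · exact fun x hx => List.mem_cons_of_mem _ (ih h hx)
  | untl φ1 φ2 ih1 ih2 =>
    rcases (by simpa [sub] using h : ψ = .untl φ1 φ2 ∨ ψ ∈ sub φ1 ∨ ψ ∈ sub φ2) with h | h | h
    · subst h; exact fun x hx => hx
    · exact fun x hx => List.mem_cons_of_mem _ (List.mem_append_left _ (ih1 h hx))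
    · exact fun x hx => List.mem_cons_of_mem _ (List.mem_append_right _ (ih2 h hx))

lemma mem_sub_neg {φ0 ψ : LTLFormula AP} (h : LTLFormula.neg ψ ∈ sub φ0) : ψ ∈ sub φ0 :=
  sub_subset h (by simp [sub, self_mem_sub])
lemma mem_sub_next {φ0 ψ : LTLFormula AP} (h : LTLFormula.next ψ ∈ sub φ0) : ψ ∈ sub φ0 :=
  sub_subset h (by simp [sub, self_mem_sub])
lemma mem_sub_disj {φ0 ψ1 ψ2 : LTLFormula AP} (h : LTLFormula.disj ψ1 ψ2 ∈ sub φ0) :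
    ψ1 ∈ sub φ0 ∧ ψ2 ∈ sub φ0 :=
  ⟨sub_subset h (by simp [sub, self_mem_sub]), sub_subset h (by simp [sub, self_mem_sub])⟩
lemma mem_sub_untl {φ0 ψ1 ψ2 : LTLFormula AP} (h : LTLFormula.untl ψ1 ψ2 ∈ sub φ0) :
    ψ1 ∈ sub φ0 ∧ ψ2 ∈ sub φ0 :=
  ⟨sub_subset h (by simp [sub, self_mem_sub]), sub_subset h (by simp [sub, self_mem_sub])⟩

lemma untl_of_sat2 {φ ψ : LTLFormula AP} {π : Trace AP} (h : ψ.sat π) :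
    (LTLFormula.untl φ ψ).sat π :=
  ⟨0, by rwa [suffix_zero], fun j hj => absurd hj (Nat.not_lt_zero j)⟩

lemma untl_step {φ ψ : LTLFormula AP} {π : Trace AP}
    (h1 : φ.sat π) (h2 : (LTLFormula.untl φ ψ).sat (π.suffix 1)) :
    (LTLFormula.untl φ ψ).sat π := by
  obtain ⟨d, hd, hall⟩ := h2
  refine ⟨d + 1, by rw [suffix_suffix, Nat.add_comm] at hd; exact hd, fun e he => ?_⟩
  match e with
  | 0 => rwa [suffix_zero]
  | e + 1 =>
    have := hall e (by omega)
    rwa [suffix_suffix, Nat.add_comm] at this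

lemma untl_unfold {φ ψ : LTLFormula AP} {π : Trace AP}
    (h : (LTLFormula.untl φ ψ).sat π) (h2 : ¬ ψ.sat π) :
    φ.sat π ∧ (LTLFormula.untl φ ψ).sat (π.suffix 1) := by
  obtain ⟨d, hd, hall⟩ := h
  match d with
  | 0 => rw [suffix_zero] at hd; exact absurd hd h2
  | d + 1 =>
    refine ⟨by have := hall 0 (by omega); rwa [suffix_zero] at this,
      ⟨d, by rw [suffix_suffix, Nat.add_comm]; exact hd, fun e he => ?_⟩⟩
    rw [suffix_suffix]
    exact hall (1 + e) (by omega)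

/-- the position map for pumping -/
def posMap (i j m : ℕ) : ℕ := if m < i then m else i + (m - i) % (j - i)

lemma posMap_lt {i j : ℕ} (hij : i < j) (m : ℕ) : posMap i j m < j := by
  unfold posMap; split
  · omega
  · have := Nat.mod_lt (m - i) (y := j - i) (by omega); omega

lemma posMap_zero (i j : ℕ) : posMap i j 0 = 0 := by
  unfold posMap; split
  · rfl
  · simp only [Nat.zero_sub, Nat.zero_mod]; omega

lemma mod_succ_cases (x d : ℕ) (hd : 0 < d) :
    (x + 1) % d = x % d + 1 ∨ (x % d + 1 = d ∧ (x + 1) % d = 0) := by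
  have h1 : x % d + d * (x / d) = x := Nat.mod_add_div x d
  have h2 : x % d < d := Nat.mod_lt _ hd
  by_cases h : x % d + 1 = d
  · right
    refine ⟨h, ?_⟩
    have : x + 1 = d + d * (x / d) := by omega
    rw [this, Nat.add_mul_mod_self_left, Nat.mod_self]
  · left
    have : x + 1 = (x % d + 1) + d * (x / d) := by omega
    rw [this, Nat.add_mul_mod_self_left, Nat.mod_eq_of_lt (by omega)]

lemma posMap_succ {i j : ℕ} (hij : i < j) (m : ℕ) :
    posMap i j (m + 1) = posMap i j m + 1 ∨
      (posMap i j m + 1 = j ∧ posMap i j (m + 1) = i) := by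
  unfold posMap
  by_cases h1 : m + 1 < i
  · left; simp [h1, show m < i by omega]
  by_cases h2 : m < i
  · have hmi : m + 1 = i := by omega
    left
    simp only [if_neg h1, if_pos h2, hmi, Nat.sub_self, Nat.zero_mod, Nat.add_zero]
    simp
  · have hd : 0 < j - i := by omega
    have hx : m + 1 - i = (m - i) + 1 := by omega
    rcases mod_succ_cases (m - i) (j - i) hd with h | ⟨h, h'⟩
    · left; simp only [if_neg h1, if_neg h2, hx, h]; omega
    · right
      constructor
      · simp only [if_neg h2]; omega
      · simp only [if_neg h1, hx, h', Nat.add_zero]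

lemma posMap_covers {i j : ℕ} (hij : i < j) (m k : ℕ) (hm : i ≤ m) (hk1 : i ≤ k)
    (hk2 : k < j) : ∃ d, posMap i j (m + d) = k := by
  set e := j - i with he
  have hd : 0 < e := by omega
  refine ⟨e - (m - i) % e + (k - i), ?_⟩
  unfold posMap
  rw [if_neg (by omega)]
  have h1 : (m - i) % e + e * ((m - i) / e) = m - i := Nat.mod_add_div _ _
  have h2 : (m - i) % e < e := Nat.mod_lt _ hd
  have : m + (e - (m - i) % e + (k - i)) - i = (k - i) + e * ((m - i) / e + 1) := by
    have : e * ((m - i) / e + 1) = e * ((m - i) / e) + e := by ring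
    omega
  rw [this, Nat.add_mul_mod_self_left, Nat.mod_eq_of_lt (by omega)]
  omega

lemma posMap_ge {i j m : ℕ} (h : i ≤ m) : i ≤ posMap i j m := by
  unfold posMap; rw [if_neg (by omega)]; omega

lemma posMap_of_lt {i j m : ℕ} (h : m < i) : posMap i j m = m := by
  unfold posMap; rw [if_pos h]

lemma posMap_mul {i j : ℕ} (hij : i < j) (t : ℕ) : posMap i j (i + (j - i) * t) = i := by
  unfold posMap
  rw [if_neg (by omega)]
  have : i + (j - i) * t - i = 0 + (j - i) * t := by omega
  rw [this, Nat.add_mul_mod_self_left, Nat.zero_mod, Nat.add_zero]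


def pumpWord (π : Trace AP) (i j : ℕ) : Trace AP := fun m => π (posMap i j m)

variable {π : Trace AP} {φ0 : LTLFormula AP} {i j : ℕ}

lemma step_equiv (hij : i < j)
    (hTh : ∀ ψ ∈ sub φ0, (ψ.sat (π.suffix i) ↔ ψ.sat (π.suffix j)))
    (m : ℕ) {ψ : LTLFormula AP} (hψ : ψ ∈ sub φ0) :
    ψ.sat (π.suffix (posMap i j (m + 1))) ↔ ψ.sat (π.suffix (posMap i j m + 1)) := by
  rcases posMap_succ hij m with h | ⟨h1, h2⟩
  · rw [h]
  · rw [h2, h1]; exact hTh ψ hψ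

lemma pump_equiv (hij : i < j)
    (hTh : ∀ ψ ∈ sub φ0, (ψ.sat (π.suffix i) ↔ ψ.sat (π.suffix j)))
    (hful : ∀ ψ1 ψ2, LTLFormula.untl ψ1 ψ2 ∈ sub φ0 →
      ∃ k, i ≤ k ∧ k < j ∧
        (¬ (LTLFormula.untl ψ1 ψ2).sat (π.suffix k) ∨ ψ2.sat (π.suffix k))) :
    ∀ ψ : LTLFormula AP, ψ ∈ sub φ0 → ∀ m,
      (ψ.sat ((pumpWord π i j).suffix m) ↔ ψ.sat (π.suffix (posMap i j m))) := by
  intro ψ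
  induction ψ with
  | bot => intro _ m; exact Iff.rfl
  | atom p =>
    intro _ m
    show p ∈ (pumpWord π i j) (m + 0) ↔ p ∈ π (posMap i j m + 0)
    simp [pumpWord]
  | neg ψ ih =>
    intro hmem m
    exact not_congr (ih (mem_sub_neg hmem) m)
  | disj ψ1 ψ2 ih1 ih2 =>
    intro hmem m
    exact or_congr (ih1 (mem_sub_disj hmem).1 m) (ih2 (mem_sub_disj hmem).2 m)
  | next ψ ih =>
    intro hmem m
    show ψ.sat (((pumpWord π i j).suffix m).suffix 1) ↔ ψ.sat ((π.suffix (posMap i j m)).suffix 1)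
    rw [suffix_suffix, suffix_suffix]
    exact (ih (mem_sub_next hmem) (m + 1)).trans (step_equiv hij hTh m (mem_sub_next hmem))
  | untl ψ1 ψ2 ih1 ih2 =>
    intro hmem m
    classical
    have hm1 : ψ1 ∈ sub φ0 := (mem_sub_untl hmem).1
    have hm2 : ψ2 ∈ sub φ0 := (mem_sub_untl hmem).2
    -- the chain lemma
    have chain : ∀ m', (LTLFormula.untl ψ1 ψ2).sat (π.suffix (posMap i j m')) →
        ∀ d, (∀ e, e < d → ¬ ψ2.sat (π.suffix (posMap i j (m' + e)))) →
        (LTLFormula.untl ψ1 ψ2).sat (π.suffix (posMap i j (m' + d))) := by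
      intro m' hχ d
      induction d with
      | zero => intro _; simpa using hχ
      | succ d ihd =>
        intro hne
        have hχd := ihd (fun e he => hne e (by omega))
        have hψ2d := hne d (by omega)
        have := (untl_unfold hχd hψ2d).2
        rw [suffix_suffix] at this
        have := (step_equiv hij hTh (m' + d) hmem).mpr this
        rwa [show m' + d + 1 = m' + (d + 1) from rfl] at this
    have fwd : ∀ d m', ψ2.sat (π.suffix (posMap i j (m' + d))) →
        (∀ e, e < d → ψ1.sat (π.suffix (posMap i j (m' + e)))) →
        (LTLFormula.untl ψ1 ψ2).sat (π.suffix (posMap i j m')) := by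
      intro d
      induction d with
      | zero => intro m' h2 _; exact untl_of_sat2 (by simpa using h2)
      | succ d ihd =>
        intro m' h2 h1
        have hstep : (LTLFormula.untl ψ1 ψ2).sat (π.suffix (posMap i j (m' + 1))) := by
          apply ihd (m' + 1)
          · rwa [show m' + 1 + d = m' + (d + 1) by omega]
          · intro e he
            have := h1 (e + 1) (by omega)
            rwa [show m' + (e + 1) = m' + 1 + e by omega] at this
        have hstep' := (step_equiv hij hTh m' hmem).mp hstep
        rw [← suffix_suffix] at hstep'
        exact untl_step (by simpa using h1 0 (by omega)) hstep'
    constructor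
    · rintro ⟨d, hd, hall⟩
      rw [suffix_suffix] at hd
      apply fwd d m ((ih2 hm2 (m + d)).mp hd)
      intro e he
      have := hall e he
      rw [suffix_suffix] at this
      exact (ih1 hm1 (m + e)).mp this
    · intro hχ
      by_cases hex : ∃ d, ψ2.sat (π.suffix (posMap i j (m + d)))
      · have hd2 := Nat.find_spec hex
        set d := Nat.find hex with hdd
        refine ⟨d, ?_, ?_⟩
        · rw [suffix_suffix]
          exact (ih2 hm2 (m + d)).mpr hd2
        · intro e he
          rw [suffix_suffix]
          apply (ih1 hm1 (m + e)).mpr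
          have hχe := chain m hχ e (fun e' he' => Nat.find_min hex (by omega))
          exact (untl_unfold hχe (Nat.find_min hex he)).1
      · exfalso
        push_neg at hex
        obtain ⟨k, hk1, hk2, hk3⟩ := hful ψ1 ψ2 hmem
        obtain ⟨d, hd⟩ := posMap_covers hij (m + i) k (by omega) hk1 hk2
        rw [show m + i + d = m + (i + d) by omega] at hd
        rcases hk3 with h | h
        · exact h (hd ▸ chain m hχ (i + d) (fun e _ => hex e))
        · exact hex (i + d) (hd ▸ h)

end Scratch

namespace Scratch
variable {AP : Type}

lemma exists_bound {X : Type} (l : List X) (F : X → ℕ → Prop)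
    (h : ∀ x ∈ l, ∃ p, F x p) : ∃ P, ∀ x ∈ l, ∃ p, p ≤ P ∧ F x p := by
  induction l with
  | nil => exact ⟨0, by simp⟩
  | cons x l ih =>
    obtain ⟨p, hp⟩ := h x List.mem_cons_self
    obtain ⟨P, hP⟩ := ih (fun y hy => h y (List.mem_cons_of_mem _ hy))
    refine ⟨max p P, fun y hy => ?_⟩
    rcases List.mem_cons.mp hy with rfl | hy
    · exact ⟨p, le_max_left _ _, hp⟩
    · obtain ⟨q, hq1, hq2⟩ := hP y hy
      exact ⟨q, le_trans hq1 (le_max_right _ _), hq2⟩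

end Scratch

/-- the support of a Büchi automaton is the intersection of the
complete consistent theories of its accepted ultimately periodic traces. -/
theorem supp_eq_sInter_upCCT (AP : Type) [Fintype AP] [Nonempty AP]
    (B : Buchi (Set AP)) :
    B.supp = ⋂₀ {K : Set (LTLFormula AP) |
      ∃ π ∈ B.lang, UltPeriodic π ∧ K = upCCT π} := by
  classical
  apply Set.Subset.antisymm
  · rintro φ hφ K ⟨π, hπ, _, rfl⟩
    exact hφ π hπ
  · intro φ hφ π hπ
    by_contra hsat
    obtain ⟨ρ, hstart, htrans, hrec⟩ := hπ
    set L := Scratch.sub φ with hL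
    set g : ℕ → Fin B.n × (Fin L.length → Prop) :=
      fun k => (ρ k, fun t => (L.get t).sat (Trace.suffix π k)) with hg
    set S : Set ℕ := {k | ρ k ∈ B.recur} with hS
    have hSinf : S.Infinite := by
      apply Set.infinite_of_forall_exists_gt
      intro a
      obtain ⟨b, hb1, hb2⟩ := hrec (a + 1)
      exact ⟨b, hb2, by omega⟩
    have hfiber : ∃ v, (S ∩ g ⁻¹' {v}).Infinite := by
      by_contra hno
      push_neg at hno
      have hsub : S ⊆ ⋃ v : Fin B.n × (Fin L.length → Prop), (S ∩ g ⁻¹' {v}) :=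
        fun k hk => Set.mem_iUnion.mpr ⟨g k, hk, rfl⟩
      exact hSinf (Set.Finite.subset (Set.finite_iUnion hno) hsub)
    obtain ⟨v, hvinf⟩ := hfiber
    obtain ⟨i, hiT⟩ := hvinf.nonempty
    -- targets for until formulas
    have htar : ∀ ψ ∈ L, ∃ p, ∀ ψ1 ψ2, ψ = LTLFormula.untl ψ1 ψ2 →
        i < p ∧ (¬ ψ.sat (Trace.suffix π p) ∨ ψ2.sat (Trace.suffix π p)) := by
      intro ψ _
      cases ψ with
      | untl ψ1 ψ2 =>
        have core : ∃ p, i < p ∧ (¬ (LTLFormula.untl ψ1 ψ2).sat (Trace.suffix π p) ∨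
            ψ2.sat (Trace.suffix π p)) := by
          by_contra hno
          push_neg at hno
          obtain ⟨hc, -⟩ := hno (i + 1) (by omega)
          obtain ⟨d, hd, -⟩ := hc
          rw [Scratch.suffix_suffix] at hd
          exact (hno (i + 1 + d) (by omega)).2 hd
        obtain ⟨p, hp1, hp2⟩ := core
        exact ⟨p, fun a b hab => by
          obtain ⟨rfl, rfl⟩ : ψ1 = a ∧ ψ2 = b := by
            injection hab with h1 h2; exact ⟨h1, h2⟩
          exact ⟨hp1, hp2⟩⟩
      | bot => exact ⟨0, fun a b hab => by cases hab⟩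
      | atom p => exact ⟨0, fun a b hab => by cases hab⟩
      | neg ψ => exact ⟨0, fun a b hab => by cases hab⟩
      | disj ψ1 ψ2 => exact ⟨0, fun a b hab => by cases hab⟩
      | next ψ => exact ⟨0, fun a b hab => by cases hab⟩
    obtain ⟨P, hP⟩ := Scratch.exists_bound L _ htar
    obtain ⟨j, hjT, hjgt⟩ := hvinf.exists_gt (max i P)
    have hij : i < j := by omega
    -- theory and state equality
    have hgi : g i = v := hiT.2
    have hgj : g j = v := hjT.2
    have hρij : ρ i = ρ j := by
      have := congrArg Prod.fst (hgi.trans hgj.symm); simpa [hg] using this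
    have hTh : ∀ ψ ∈ L, (ψ.sat (Trace.suffix π i) ↔ ψ.sat (Trace.suffix π j)) := by
      intro ψ hψ
      obtain ⟨t, ht⟩ := List.get_of_mem hψ
      have hfun := congrArg Prod.snd (hgi.trans hgj.symm)
      have := congrFun hfun t
      simp only [hg] at this
      rw [ht] at this
      exact iff_of_eq this
    have hful : ∀ ψ1 ψ2, LTLFormula.untl ψ1 ψ2 ∈ L →
        ∃ k, i ≤ k ∧ k < j ∧
          (¬ (LTLFormula.untl ψ1 ψ2).sat (Trace.suffix π k) ∨ ψ2.sat (Trace.suffix π k)) := by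
      intro ψ1 ψ2 hmem
      obtain ⟨p, hpP, hp⟩ := hP _ hmem
      obtain ⟨hip, hdisj⟩ := hp ψ1 ψ2 rfl
      exact ⟨p, by omega, by omega, hdisj⟩
    -- the pumped word
    set w : Trace AP := Scratch.pumpWord π i j with hw
    have hequiv := Scratch.pump_equiv (φ0 := φ) hij hTh hful
    have hw0 : ¬ φ.sat w := by
      intro hc
      apply hsat
      have := (hequiv φ (Scratch.self_mem_sub φ) 0).mp
        (by rwa [Scratch.suffix_zero])
      rwa [Scratch.posMap_zero, Scratch.suffix_zero] at this
    -- w is accepted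
    have hacc : B.Accepts w := by
      refine ⟨fun m => ρ (Scratch.posMap i j m), ?_, ?_, ?_⟩
      · show ρ (Scratch.posMap i j 0) ∈ B.start
        rw [Scratch.posMap_zero]; exact hstart
      · intro m
        show B.trans (ρ (Scratch.posMap i j m)) (w m) (ρ (Scratch.posMap i j (m + 1)))
        have ht := htrans (Scratch.posMap i j m)
        rcases Scratch.posMap_succ hij m with h | ⟨h1, h2⟩
        · rw [h]; exact ht
        · rw [h2]; rw [h1] at ht; rwa [← hρij] at ht
      · intro N
        refine ⟨i + (j - i) * N, by
          have : N ≤ (j - i) * N := Nat.le_mul_of_pos_left N (by omega)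
          omega, ?_⟩
        show ρ (Scratch.posMap i j (i + (j - i) * N)) ∈ B.recur
        rw [Scratch.posMap_mul hij]
        exact hiT.1
    -- w is ultimately periodic
    have hup : UltPeriodic w := by
      refine ⟨List.ofFn (fun t : Fin i => π t.val),
        List.ofFn (fun t : Fin (j - i) => π (i + t.val)),
        ?_, ?_⟩
      · intro hc
        have := congrArg List.length hc
        simp at this
        omega
      · funext m
        show π (Scratch.posMap i j m) = _
        unfold extendPer
        simp only [List.length_ofFn]
        split
        · next h =>
          rw [Scratch.posMap_of_lt h]
          rw [List.get_eq_getElem, List.getElem_ofFn]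
        · next h =>
          rw [List.get_eq_getElem, List.getElem_ofFn]
          show π (Scratch.posMap i j m) = π (i + (m - i) % (j - i))
          unfold Scratch.posMap
          rw [if_neg h]
    exact hw0 (hφ (upCCT w) ⟨w, hacc, hup, rfl⟩)
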